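/- arXiv:cs/0508129 — 4 statements merged into one kernel-verified Lean document; each statement's English description precedes it below -/
import Mathlib

section
/- Let Q be an IPSTN problem defined by a phylogeny ⟨V,E,I,S,f⟩ with root R and a function v ↦ (τ_min(v), τ_max(v)) assigning to each vertex an open interval. A set X of 2-element subsets of V↑ is a solution to Q if and only if (i) X is admissible, and (ii) there exists a real-valued function τ on V ∪ V_X such that (a) for every v ∈ V, τ_min(v) < τ(v) < τ_max(v); (b) for every v ∈ V \ {R}, τ(par(v)) < τ(v); (c) for every element v↑ of V_X, τ(par(v)) < τ(v↑) < τ(v); and (d) for every element {u↑, v↑} of X, τ(u↑) = τ(v↑). -/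
namespace Phylo

variable {α : Type*} {ι : Type*} {σ : Type*}

/-- `y` is reachable from `x` by a directed path along edges in `E`,
all of whose vertices belong to `W`. -/
def ReachableIn (E : Set (α × α)) (W : Set α) (x y : α) : Prop :=
  ∃ (n : ℕ) (p : ℕ → α), p 0 = x ∧ p n = y ∧ (∀ j ≤ n, p j ∈ W) ∧
    ∀ j < n, (p j, p (j + 1)) ∈ E

/-- `⟨V,E⟩` is a finite rooted tree with root `R`: a finite digraph with a vertex `R`
of in-degree 0 such that every vertex different from `R` has in-degree 1 and is
reachable from `R`. -/
structure IsRootedTree (V : Set α) (E : Set (α × α)) (R : α) : Prop where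
  finite : V.Finite
  edge_fst_mem : ∀ e ∈ E, e.1 ∈ V
  edge_snd_mem : ∀ e ∈ E, e.2 ∈ V
  edge_ne : ∀ e ∈ E, e.1 ≠ e.2
  root_mem : R ∈ V
  root_no_parent : ∀ u, (u, R) ∉ E
  parent_unique : ∀ v ∈ V, v ≠ R → ∃! u, (u, v) ∈ E
  root_reaches : ∀ v ∈ V, ReachableIn E V R v

/-- The digraph with edge set `F` has a subgraph with vertex set `W` that is
a rooted tree. -/
def HasRootedSubtree (F : Set (α × α)) (W : Set α) : Prop :=
  ∃ F' ⊆ F, (∀ e ∈ F', e.1 ∈ W ∧ e.2 ∈ W) ∧ ∃ r, IsRootedTree W F' r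

/-- `v` is a leaf of `⟨V,E⟩`: a vertex of out-degree 0. -/
def IsLeaf (V : Set α) (E : Set (α × α)) (v : α) : Prop :=
  v ∈ V ∧ ∀ u, (v, u) ∉ E

/-! Networks built from a set `X` of 2-element subsets of `V↑`.
A symbol `v↑` is represented by `Sum.inr v : α ⊕ α`, while a vertex `v` of the
tree is represented by `Sum.inl v`.  An unordered pair `{u↑, v↑}` is represented
by `s(u, v) : Sym2 α`. -/

/-- `V_X`: the union of the elements of `X`. -/
def VXset (X : Set (Sym2 α)) : Set α := {v | ∃ e ∈ X, v ∈ e}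

/-- Lateral edges of the network determined by `X`: the edges `⟨u↑, v↑⟩` and
`⟨v↑, u↑⟩` for `{u↑, v↑} ∈ X`. -/
def IsLateralEdgeX (X : Set (Sym2 α)) (e : (α ⊕ α) × (α ⊕ α)) : Prop :=
  ∃ u v, s(u, v) ∈ X ∧ e = (Sum.inr u, Sum.inr v)

/-- `E_X`: obtained from `E` by replacing, for each `v↑ ∈ V_X`, the edge
`⟨par v, v⟩` with `⟨par v, v↑⟩` and `⟨v↑, v⟩`, and adding, for each
`{u↑, v↑} ∈ X`, the lateral edges `⟨u↑, v↑⟩` and `⟨v↑, u↑⟩`. -/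
def EXset (E : Set (α × α)) (par : α → α) (X : Set (Sym2 α)) :
    Set ((α ⊕ α) × (α ⊕ α)) :=
  {e | (∃ u v, (u, v) ∈ E ∧ v ∉ VXset X ∧ e = (Sum.inl u, Sum.inl v)) ∨
       (∃ v ∈ VXset X, e = (Sum.inl (par v), Sum.inr v)) ∨
       (∃ v ∈ VXset X, e = (Sum.inr v, Sum.inl v)) ∨
       IsLateralEdgeX X e}

/-- The vertex set `V ∪ V_X` of the network determined by `X`. -/
def netVertsX (V : Set α) (X : Set (Sym2 α)) : Set (α ⊕ α) :=
  Sum.inl '' V ∪ Sum.inr '' VXset X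

/-- `X` is admissible: there is a function `g : (V ∪ V_X) × I → S` agreeing with
`f` on leaves such that every nonempty set `V_is = {x : g(x,i) = s}` carries a
rooted subtree of the network `⟨V ∪ V_X, E_X⟩`. -/
def Admissible (V : Set α) (E : Set (α × α)) (par : α → α)
    (f : α → ι → σ) (X : Set (Sym2 α)) : Prop :=
  ∃ g : α ⊕ α → ι → σ,
    (∀ v, IsLeaf V E v → ∀ i, g (Sum.inl v) i = f v i) ∧
    ∀ i s, ({x ∈ netVertsX V X | g x i = s}).Nonempty →
      HasRootedSubtree (EXset E par X) {x ∈ netVertsX V X | g x i = s}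

/-! Events, contacts and the networks they determine.  An event `v↑t` is
represented by the pair `(v, t) : α × ℝ`; in a network it appears as
`Sum.inr (v, t) : α ⊕ (α × ℝ)`. -/

/-- `(v, t)` is an event of the temporal phylogeny with time function `τ`:
`v ∈ V \ {R}` and `τ(par v) < t ≤ τ(v)`. -/
def IsEvent (V : Set α) (R : α) (par : α → α) (τ : α → ℝ) (p : α × ℝ) : Prop :=
  p.1 ∈ V ∧ p.1 ≠ R ∧ τ (par p.1) < p.2 ∧ p.2 ≤ τ p.1

/-- A contact: a set of two different concurrent events. -/
def IsContact (V : Set α) (R : α) (par : α → α) (τ : α → ℝ)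
    (c : Sym2 (α × ℝ)) : Prop :=
  ¬ c.IsDiag ∧ (∀ p ∈ c, IsEvent V R par τ p) ∧ ∀ p ∈ c, ∀ q ∈ c, p.2 = q.2

/-- `V_C`: the union of the contacts in `C`. -/
def VCset (C : Set (Sym2 (α × ℝ))) : Set (α × ℝ) := {p | ∃ c ∈ C, p ∈ c}

/-- `C` is a simple set of contacts for the temporal phylogeny with time
function `τ`: a finite set of contacts such that `t < τ(v)` for every event
`v↑t` in `V_C`, and for every vertex `v` there is at most one `t` with
`v↑t ∈ V_C`. -/
def SimpleContacts (V : Set α) (R : α) (par : α → α) (τ : α → ℝ)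
    (C : Set (Sym2 (α × ℝ))) : Prop :=
  C.Finite ∧ (∀ c ∈ C, IsContact V R par τ c) ∧
    (∀ p ∈ VCset C, p.2 < τ p.1) ∧
    ∀ v t t', (v, t) ∈ VCset C → (v, t') ∈ VCset C → t = t'

/-- Lateral edges of the network determined by `C`. -/
def IsLateralEdgeC (C : Set (Sym2 (α × ℝ)))
    (e : (α ⊕ (α × ℝ)) × (α ⊕ (α × ℝ))) : Prop :=
  ∃ p q, s(p, q) ∈ C ∧ e = (Sum.inr p, Sum.inr q)

/-- `E_C`: obtained from `E` by replacing, for each event `v↑t ∈ V_C`, the edge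
`⟨par v, v⟩` with `⟨par v, v↑t⟩` and `⟨v↑t, v⟩`, and adding, for each contact
`{u↑t, v↑t} ∈ C`, the lateral edges `⟨u↑t, v↑t⟩` and `⟨v↑t, u↑t⟩`. -/
def ECset (E : Set (α × α)) (par : α → α) (C : Set (Sym2 (α × ℝ))) :
    Set ((α ⊕ (α × ℝ)) × (α ⊕ (α × ℝ))) :=
  {e | (∃ u v, (u, v) ∈ E ∧ (∀ t, (v, t) ∉ VCset C) ∧ e = (Sum.inl u, Sum.inl v)) ∨
       (∃ p ∈ VCset C, e = (Sum.inl (par p.1), Sum.inr p)) ∨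
       (∃ p ∈ VCset C, e = (Sum.inr p, Sum.inl p.1)) ∨
       IsLateralEdgeC C e}

/-- The vertex set `V ∪ V_C` of the network determined by `C`. -/
def netVertsC (V : Set α) (C : Set (Sym2 (α × ℝ))) : Set (α ⊕ (α × ℝ)) :=
  Sum.inl '' V ∪ Sum.inr '' VCset C

/-- `C` is perfect: there is `g : (V ∪ V_C) × I → S` agreeing with `f` on the
leaves such that every nonempty set `V_is = {x : g(x,i) = s}` carries a rooted
subtree of the network `⟨V ∪ V_C, E_C⟩`. -/
def PerfectContacts (V : Set α) (E : Set (α × α)) (par : α → α)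
    (f : α → ι → σ) (C : Set (Sym2 (α × ℝ))) : Prop :=
  ∃ g : α ⊕ (α × ℝ) → ι → σ,
    (∀ v, IsLeaf V E v → ∀ i, g (Sum.inl v) i = f v i) ∧
    ∀ i s, ({x ∈ netVertsC V C | g x i = s}).Nonempty →
      HasRootedSubtree (ECset E par C) {x ∈ netVertsC V C | g x i = s}

/-- The summary of a set of contacts: each event `v↑t` is replaced by `v↑`. -/
def summary (C : Set (Sym2 (α × ℝ))) : Set (Sym2 α) :=
  Sym2.map Prod.fst '' C

/-- `X` is a solution to the IPSTN problem given by the phylogeny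
`⟨V,E,I,S,f⟩` (with root `R` and parent function `par`) and the intervals
`(τmin v, τmax v)`: `X` is a set of 2-element subsets of `V↑` that is the
summary of a perfect simple set of contacts for a temporal phylogeny
`⟨V,E,I,S,f,τ⟩` with `τmin v < τ v < τmax v` for all `v ∈ V`. -/
def IsSolution (V : Set α) (E : Set (α × α)) (R : α) (par : α → α)
    (f : α → ι → σ) (τmin τmax : α → EReal) (X : Set (Sym2 α)) : Prop :=
  (∀ e ∈ X, ¬ e.IsDiag ∧ ∀ v ∈ e, v ∈ V ∧ v ≠ R) ∧
  ∃ τ : α → ℝ,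
    (∀ e ∈ E, τ e.1 < τ e.2) ∧
    (∀ v ∈ V, τmin v < (τ v : EReal) ∧ (τ v : EReal) < τmax v) ∧
    ∃ C : Set (Sym2 (α × ℝ)),
      SimpleContacts V R par τ C ∧ PerfectContacts V E par f C ∧ X = summary C

/-- Condition (ii) of Proposition 1: a real-valued function `τ` on `V ∪ V_X`
(represented as a function on `α ⊕ α`, with `Sum.inl v` standing for `v` and
`Sum.inr v` for `v↑`) satisfying (a)–(d). -/
def TimeAssignment (V : Set α) (R : α) (par : α → α)
    (τmin τmax : α → EReal) (X : Set (Sym2 α)) (τ : α ⊕ α → ℝ) : Prop :=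
  (∀ v ∈ V, τmin v < (τ (Sum.inl v) : EReal) ∧ (τ (Sum.inl v) : EReal) < τmax v) ∧
  (∀ v ∈ V, v ≠ R → τ (Sum.inl (par v)) < τ (Sum.inl v)) ∧
  (∀ v ∈ VXset X, τ (Sum.inl (par v)) < τ (Sum.inr v) ∧ τ (Sum.inr v) < τ (Sum.inl v)) ∧
  ∀ u v, s(u, v) ∈ X → τ (Sum.inr u) = τ (Sum.inr v)


section Aux

variable {β : Type*} {γ : Type*}

lemma ReachableIn.map (φ : β → γ) {E : Set (β × β)} {W : Set β} {x y : β}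
    (h : ReachableIn E W x y) :
    ReachableIn ((fun e => (φ e.1, φ e.2)) '' E) (φ '' W) (φ x) (φ y) := by
  obtain ⟨n, p, h0, hn, hW, hE⟩ := h
  exact ⟨n, φ ∘ p, by simp [h0], by simp [hn],
    fun j hj => ⟨p j, hW j hj, rfl⟩,
    fun j hj => ⟨(p j, p (j + 1)), hE j hj, rfl⟩⟩

lemma IsRootedTree.map {W : Set β} {F : Set (β × β)} {r : β}
    (h : IsRootedTree W F r) (φ : β → γ) (hφ : Set.InjOn φ W) :
    IsRootedTree (φ '' W) ((fun e => (φ e.1, φ e.2)) '' F) (φ r) := by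
  constructor
  · exact h.finite.image φ
  · rintro _ ⟨e, he, rfl⟩; exact ⟨e.1, h.edge_fst_mem e he, rfl⟩
  · rintro _ ⟨e, he, rfl⟩; exact ⟨e.2, h.edge_snd_mem e he, rfl⟩
  · rintro _ ⟨e, he, rfl⟩ hcon
    exact h.edge_ne e he (hφ (h.edge_fst_mem e he) (h.edge_snd_mem e he) hcon)
  · exact ⟨r, h.root_mem, rfl⟩
  · rintro u ⟨e, he, he'⟩
    have h1 : φ e.1 = u := congrArg Prod.fst he'
    have h2 : φ e.2 = φ r := congrArg Prod.snd he'
    have : e.2 = r := hφ (h.edge_snd_mem e he) h.root_mem h2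
    exact h.root_no_parent e.1 (by rwa [← Prod.mk.eta (p := e), this] at he)
  · rintro _ ⟨v, hv, rfl⟩ hvr
    have hvr' : v ≠ r := fun hh => hvr (by rw [hh])
    obtain ⟨u, hu, huniq⟩ := h.parent_unique v hv hvr'
    refine ⟨φ u, ⟨(u, v), hu, rfl⟩, ?_⟩
    rintro y ⟨e, he, he'⟩
    have h1 : φ e.1 = y := congrArg Prod.fst he'
    have h2 : φ e.2 = φ v := congrArg Prod.snd he'
    have h3 : e.2 = v := hφ (h.edge_snd_mem e he) hv h2
    have : e.1 = u := huniq e.1 (by rwa [← Prod.mk.eta (p := e), h3] at he)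
    rw [← h1, this]
  · rintro _ ⟨v, hv, rfl⟩
    exact ReachableIn.map φ (h.root_reaches v hv)

lemma HasRootedSubtree.map {F : Set (β × β)} {W : Set β}
    (h : HasRootedSubtree F W) (φ : β → γ) (hφ : Set.InjOn φ W)
    (F₂ : Set (γ × γ))
    (hF : ∀ e ∈ F, e.1 ∈ W → e.2 ∈ W → (φ e.1, φ e.2) ∈ F₂) :
    HasRootedSubtree F₂ (φ '' W) := by
  obtain ⟨F', hF'F, hmem, r, htree⟩ := h
  refine ⟨(fun e => (φ e.1, φ e.2)) '' F', ?_, ?_, φ r, htree.map φ hφ⟩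
  · rintro _ ⟨e, he, rfl⟩
    exact hF e (hF'F he) (hmem e he).1 (hmem e he).2
  · rintro _ ⟨e, he, rfl⟩
    exact ⟨⟨e.1, (hmem e he).1, rfl⟩, ⟨e.2, (hmem e he).2, rfl⟩⟩

end Aux

section Aux2

variable {α : Type*}

lemma inl_mem_netVertsX {V : Set α} {X : Set (Sym2 α)} {v : α} :
    Sum.inl v ∈ netVertsX V X ↔ v ∈ V := by
  simp [netVertsX]

lemma inr_mem_netVertsX {V : Set α} {X : Set (Sym2 α)} {v : α} :
    Sum.inr v ∈ netVertsX V X ↔ v ∈ VXset X := by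
  simp [netVertsX]

lemma inl_mem_netVertsC {V : Set α} {C : Set (Sym2 (α × ℝ))} {v : α} :
    Sum.inl v ∈ netVertsC V C ↔ v ∈ V := by
  simp [netVertsC]

lemma inr_mem_netVertsC {V : Set α} {C : Set (Sym2 (α × ℝ))} {p : α × ℝ} :
    Sum.inr p ∈ netVertsC V C ↔ p ∈ VCset C := by
  simp [netVertsC]

lemma mem_VXset_summary {C : Set (Sym2 (α × ℝ))} {v : α} :
    v ∈ VXset (summary C) ↔ ∃ t, (v, t) ∈ VCset C := by
  simp only [VXset, summary, VCset, Set.mem_setOf_eq, Set.mem_image]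
  constructor
  · rintro ⟨e, ⟨c, hc, rfl⟩, hv⟩
    rw [Sym2.mem_map] at hv
    obtain ⟨p, hp, rfl⟩ := hv
    exact ⟨p.2, c, hc, hp⟩
  · rintro ⟨t, c, hc, hm⟩
    exact ⟨Sym2.map Prod.fst c, ⟨c, hc, rfl⟩, Sym2.mem_map.2 ⟨(v, t), hm, rfl⟩⟩

lemma mem_VCset_image {h : α → α × ℝ} {X : Set (Sym2 α)} {p : α × ℝ} :
    p ∈ VCset (Sym2.map h '' X) ↔ ∃ v ∈ VXset X, h v = p := by
  simp only [VCset, VXset, Set.mem_setOf_eq, Set.mem_image]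
  constructor
  · rintro ⟨c, ⟨e, he, rfl⟩, hp⟩
    rw [Sym2.mem_map] at hp
    obtain ⟨v, hv, rfl⟩ := hp
    exact ⟨v, ⟨e, he, hv⟩, rfl⟩
  · rintro ⟨v, ⟨e, he, hv⟩, rfl⟩
    exact ⟨Sym2.map h e, ⟨e, he, rfl⟩, Sym2.mem_map.2 ⟨v, hv, rfl⟩⟩

lemma summary_pair {C : Set (Sym2 (α × ℝ))} {u v : α} (h : s(u, v) ∈ summary C) :
    ∃ p q : α × ℝ, s(p, q) ∈ C ∧ p.1 = u ∧ q.1 = v := by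
  obtain ⟨c, hc, hmap⟩ := h
  revert hc hmap
  induction c using Sym2.ind with
  | _ p q =>
    intro hc hmap
    rw [Sym2.map_pair_eq, Sym2.eq_iff] at hmap
    rcases hmap with ⟨h1, h2⟩ | ⟨h1, h2⟩
    · exact ⟨p, q, hc, h1, h2⟩
    · exact ⟨q, p, by rwa [Sym2.eq_swap] at hc, h2, h1⟩

end Aux2

/-- Proposition 1.  A set `X` of 2-element subsets of `V↑` is
a solution to the IPSTN problem `Q` iff (i) `X` is admissible and (ii) there is
a real-valued function `τ` on `V ∪ V_X` satisfying (a)–(d). -/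
theorem ipstn_solution_iff_admissible_and_timeAssignment
    {α ι σ : Type*} [Finite ι] [Finite σ]
    (V : Set α) (E : Set (α × α)) (R : α) (par : α → α) (f : α → ι → σ)
    (τmin τmax : α → EReal)
    (hT : IsRootedTree V E R)
    (hpar : ∀ v ∈ V, v ≠ R → (par v, v) ∈ E)
    (hint : ∀ v ∈ V, τmin v < τmax v)
    (X : Set (Sym2 α))
    (hX : ∀ e ∈ X, ¬ e.IsDiag ∧ ∀ v ∈ e, v ∈ V ∧ v ≠ R) :
    IsSolution V E R par f τmin τmax X ↔
      Admissible V E par f X ∧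
        ∃ τ : α ⊕ α → ℝ, TimeAssignment V R par τmin τmax X τ := by
  constructor
  · rintro ⟨hX', τ, hτE, hτint, C, ⟨hCfin, hCcontact, hClt, hCuniq⟩, hCperf, rfl⟩
    classical
    set tsel : α → ℝ := fun v => if h : ∃ t, (v, t) ∈ VCset C then h.choose else τ v
      with htsel_def
    have htsel : ∀ v t, (v, t) ∈ VCset C → tsel v = t := by
      intro v t hvt
      have hex : ∃ t, (v, t) ∈ VCset C := ⟨t, hvt⟩
      simp only [htsel_def, dif_pos hex]
      exact hCuniq v _ t hex.choose_spec hvt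
    set φ : α ⊕ (α × ℝ) → α ⊕ α := Sum.elim Sum.inl (fun p => Sum.inr p.1) with hφdef
    set ψ : α ⊕ α → α ⊕ (α × ℝ) := Sum.elim Sum.inl (fun v => Sum.inr (v, tsel v))
      with hψdef
    have hφinj : Set.InjOn φ (netVertsC V C) := by
      rintro x hx y hy hxy
      cases x with
      | inl a =>
        cases y with
        | inl b => exact congrArg Sum.inl (Sum.inl.inj hxy)
        | inr q => exact absurd hxy (by simp [hφdef])
      | inr p =>
        cases y with
        | inl b => exact absurd hxy (by simp [hφdef])
        | inr q =>
          have hp : p ∈ VCset C := inr_mem_netVertsC.1 hx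
          have hq : q ∈ VCset C := inr_mem_netVertsC.1 hy
          have h1 : p.1 = q.1 := Sum.inr.inj hxy
          have h2 : p.2 = q.2 := by
            refine hCuniq p.1 p.2 q.2 (by simpa using hp) ?_
            rw [h1]; simpa using hq
          exact congrArg Sum.inr (Prod.ext h1 h2)
    obtain ⟨g, hgleaf, hgtree⟩ := hCperf
    constructor
    · refine ⟨fun x => g (ψ x), fun v hv i => hgleaf v hv i, ?_⟩
      intro i s hne
      have key : φ '' {x ∈ netVertsC V C | g x i = s} =
          {x ∈ netVertsX V (summary C) | g (ψ x) i = s} := by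
        ext y
        constructor
        · rintro ⟨x, ⟨hxnet, hxg⟩, rfl⟩
          cases x with
          | inl v =>
            exact ⟨inl_mem_netVertsX.2 (inl_mem_netVertsC.1 hxnet), hxg⟩
          | inr p =>
            have hp : p ∈ VCset C := inr_mem_netVertsC.1 hxnet
            refine ⟨inr_mem_netVertsX.2 (mem_VXset_summary.2 ⟨p.2, by simpa using hp⟩), ?_⟩
            have hts : tsel p.1 = p.2 := htsel p.1 p.2 (by simpa using hp)
            show g (Sum.inr (p.1, tsel p.1)) i = s
            rw [hts]
            simpa using hxg
        · rintro ⟨hynet, hyg⟩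
          cases y with
          | inl v =>
            exact ⟨Sum.inl v, ⟨inl_mem_netVertsC.2 (inl_mem_netVertsX.1 hynet), hyg⟩, rfl⟩
          | inr v =>
            obtain ⟨t, ht⟩ := mem_VXset_summary.1 (inr_mem_netVertsX.1 hynet)
            have hts : tsel v = t := htsel v t ht
            refine ⟨Sum.inr (v, t), ⟨inr_mem_netVertsC.2 ht, ?_⟩, rfl⟩
            have : g (ψ (Sum.inr v)) i = s := hyg
            rw [show ψ (Sum.inr v) = Sum.inr (v, tsel v) from rfl, hts] at this
            exact this
      have hne' : ({x ∈ netVertsC V C | g x i = s}).Nonempty := by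
        obtain ⟨y, hy⟩ := hne
        rw [← key] at hy
        obtain ⟨x, hx, _⟩ := hy
        exact ⟨x, hx⟩
      have hedges : ∀ e ∈ ECset E par C,
          e.1 ∈ {x ∈ netVertsC V C | g x i = s} → e.2 ∈ {x ∈ netVertsC V C | g x i = s} →
          (φ e.1, φ e.2) ∈ EXset E par (summary C) := by
        rintro e he - -
        rcases he with ⟨u, v, huv, hnC, rfl⟩ | ⟨p, hp, rfl⟩ | ⟨p, hp, rfl⟩ | ⟨p, q, hpq, rfl⟩
        · refine Or.inl ⟨u, v, huv, ?_, rfl⟩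
          intro hv
          obtain ⟨t, ht⟩ := mem_VXset_summary.1 hv
          exact hnC t ht
        · exact Or.inr (Or.inl ⟨p.1, mem_VXset_summary.2 ⟨p.2, by simpa using hp⟩, rfl⟩)
        · exact Or.inr (Or.inr (Or.inl
            ⟨p.1, mem_VXset_summary.2 ⟨p.2, by simpa using hp⟩, rfl⟩))
        · exact Or.inr (Or.inr (Or.inr
            ⟨p.1, q.1, ⟨s(p, q), hpq, Sym2.map_pair_eq _ _ _⟩, rfl⟩))
      have hsub := (hgtree i s hne').map φ (hφinj.mono (Set.sep_subset _ _))
        (EXset E par (summary C)) hedges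
      rwa [key] at hsub
    · refine ⟨Sum.elim τ tsel, fun v hv => hτint v hv, ?_, ?_, ?_⟩
      · intro v hv hvR
        exact hτE (par v, v) (hpar v hv hvR)
      · intro v hv
        obtain ⟨t, ht⟩ := mem_VXset_summary.1 hv
        have hts : tsel v = t := htsel v t ht
        obtain ⟨c, hc, hm⟩ := ht
        have hev := (hCcontact c hc).2.1 (v, t) hm
        have hlt := hClt (v, t) ⟨c, hc, hm⟩
        constructor
        · show τ (par v) < tsel v
          rw [hts]; exact hev.2.2.1
        · show tsel v < τ v
          rw [hts]; exact hlt
      · intro u v huv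
        obtain ⟨p, q, hpq, hu, hv⟩ := summary_pair huv
        have hpm : p ∈ s(p, q) := Sym2.mem_mk_left p q
        have hqm : q ∈ s(p, q) := Sym2.mem_mk_right p q
        have hpq2 : p.2 = q.2 := (hCcontact _ hpq).2.2 p hpm q hqm
        show tsel u = tsel v
        rw [htsel u p.2 (by rw [← hu]; exact ⟨_, hpq, by simpa using hpm⟩),
          htsel v q.2 (by rw [← hv]; exact ⟨_, hpq, by simpa using hqm⟩), hpq2]
  · rintro ⟨⟨g', hg'leaf, hg'tree⟩, τ', hτa, hτb, hτc, hτd⟩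
    classical
    set h : α → α × ℝ := fun v => (v, τ' (Sum.inr v)) with hh
    have mem_VC : ∀ p : α × ℝ, p ∈ VCset (Sym2.map h '' X) ↔ ∃ v ∈ VXset X, h v = p :=
      fun p => mem_VCset_image
    refine ⟨hX, fun v => τ' (Sum.inl v), ?_, fun v hv => hτa v hv, Sym2.map h '' X,
      ?_, ?_, ?_⟩
    · intro e he
      have hv : e.2 ∈ V := hT.edge_snd_mem e he
      have hvR : e.2 ≠ R := by
        intro hc
        exact hT.root_no_parent e.1 (by rw [← hc]; exact he)
      obtain ⟨u, hu, huniq⟩ := hT.parent_unique e.2 hv hvR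
      have h1 : e.1 = u := huniq e.1 he
      have h2 : par e.2 = u := huniq _ (hpar e.2 hv hvR)
      have := hτb e.2 hv hvR
      rw [h1, ← h2]
      exact this
    · have hXfin : X.Finite := by
        have hsub : X ⊆ (fun p : α × α => s(p.1, p.2)) '' (V ×ˢ V) := by
          have : ∀ e, e ∈ X → e ∈ (fun p : α × α => s(p.1, p.2)) '' (V ×ˢ V) := by
            intro e
            induction e using Sym2.ind with
            | _ a b =>
              intro he
              have ha := ((hX _ he).2 a (Sym2.mem_mk_left a b)).1
              have hb := ((hX _ he).2 b (Sym2.mem_mk_right a b)).1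
              exact ⟨(a, b), ⟨ha, hb⟩, rfl⟩
          exact this
        exact ((hT.finite.prod hT.finite).image _).subset hsub
      refine ⟨hXfin.image _, ?_, ?_, ?_⟩
      · have : ∀ e, e ∈ X → IsContact V R par (fun v => τ' (Sum.inl v)) (Sym2.map h e) := by
          intro e
          induction e using Sym2.ind with
          | _ a b =>
            intro he
            have hXe := hX _ he
            have haV := hXe.2 a (Sym2.mem_mk_left a b)
            have hbV := hXe.2 b (Sym2.mem_mk_right a b)
            have haX : a ∈ VXset X := ⟨_, he, Sym2.mem_mk_left a b⟩
            have hbX : b ∈ VXset X := ⟨_, he, Sym2.mem_mk_right a b⟩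
            rw [Sym2.map_pair_eq]
            refine ⟨?_, ?_, ?_⟩
            · rw [Sym2.mk_isDiag_iff]
              intro hcon
              exact hXe.1 (Sym2.mk_isDiag_iff.2 (congrArg Prod.fst hcon))
            · intro p hp
              rw [Sym2.mem_iff] at hp
              rcases hp with rfl | rfl
              · exact ⟨haV.1, haV.2, (hτc a haX).1, le_of_lt (hτc a haX).2⟩
              · exact ⟨hbV.1, hbV.2, (hτc b hbX).1, le_of_lt (hτc b hbX).2⟩
            · have heq : (h a).2 = (h b).2 := hτd a b he
              intro p hp q hq
              rw [Sym2.mem_iff] at hp hq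
              rcases hp with rfl | rfl <;> rcases hq with rfl | rfl <;>
                first | rfl | exact heq | exact heq.symm
        rintro c ⟨e, he, rfl⟩
        exact this e he
      · rintro p hp
        obtain ⟨v, hvX, rfl⟩ := (mem_VC p).1 hp
        exact (hτc v hvX).2
      · intro v t t' h1 h2
        obtain ⟨w, hw, hwv⟩ := (mem_VC _).1 h1
        obtain ⟨w', hw', hwv'⟩ := (mem_VC _).1 h2
        have e1 : w = v := congrArg Prod.fst hwv
        have e2 : w' = v := congrArg Prod.fst hwv'
        have e3 : τ' (Sum.inr w) = t := congrArg Prod.snd hwv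
        have e4 : τ' (Sum.inr w') = t' := congrArg Prod.snd hwv'
        rw [← e3, ← e4, e1, e2]
    · set ψ : α ⊕ α → α ⊕ (α × ℝ) := Sum.elim Sum.inl (fun v => Sum.inr (h v))
        with hψdef
      refine ⟨fun x => g' (Sum.elim Sum.inl (fun p : α × ℝ => Sum.inr p.1) x),
        fun v hv i => hg'leaf v hv i, ?_⟩
      intro i s hne
      have hψinj : Function.Injective ψ := by
        intro x y hxy
        cases x with
        | inl a =>
          cases y with
          | inl b => exact congrArg Sum.inl (Sum.inl.inj hxy)
          | inr b => exact absurd hxy (by simp [hψdef])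
        | inr a =>
          cases y with
          | inl b => exact absurd hxy (by simp [hψdef])
          | inr b =>
            exact congrArg Sum.inr (congrArg Prod.fst (Sum.inr.inj hxy))
      set C : Set (Sym2 (α × ℝ)) := Sym2.map h '' X with hCdef
      set gC : α ⊕ (α × ℝ) → ι → σ :=
        fun x => g' (Sum.elim Sum.inl (fun p : α × ℝ => Sum.inr p.1) x) with hgCdef
      have key : ψ '' {x ∈ netVertsX V X | g' x i = s} =
          {x ∈ netVertsC V C | gC x i = s} := by
        ext y
        constructor
        · rintro ⟨x, ⟨hxnet, hxg⟩, rfl⟩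
          cases x with
          | inl v =>
            exact ⟨inl_mem_netVertsC.2 (inl_mem_netVertsX.1 hxnet), hxg⟩
          | inr v =>
            have hv := inr_mem_netVertsX.1 hxnet
            exact ⟨inr_mem_netVertsC.2 ((mem_VC _).2 ⟨v, hv, rfl⟩), hxg⟩
        · rintro ⟨hynet, hyg⟩
          cases y with
          | inl v =>
            exact ⟨Sum.inl v, ⟨inl_mem_netVertsX.2 (inl_mem_netVertsC.1 hynet), hyg⟩, rfl⟩
          | inr p =>
            obtain ⟨v, hv, rfl⟩ := (mem_VC _).1 (inr_mem_netVertsC.1 hynet)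
            exact ⟨Sum.inr v, ⟨inr_mem_netVertsX.2 hv, hyg⟩, rfl⟩
      have hne' : ({x ∈ netVertsX V X | g' x i = s}).Nonempty := by
        obtain ⟨y, hy⟩ := hne
        rw [← key] at hy
        obtain ⟨x, hx, _⟩ := hy
        exact ⟨x, hx⟩
      have hedges : ∀ e ∈ EXset E par X,
          e.1 ∈ {x ∈ netVertsX V X | g' x i = s} →
          e.2 ∈ {x ∈ netVertsX V X | g' x i = s} →
          (ψ e.1, ψ e.2) ∈ ECset E par C := by
        rintro e he - -
        rcases he with ⟨u, v, huv, hvX, rfl⟩ | ⟨v, hv, rfl⟩ | ⟨v, hv, rfl⟩ | ⟨u, v, huv, rfl⟩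
        · refine Or.inl ⟨u, v, huv, ?_, rfl⟩
          intro t ht
          obtain ⟨w, hw, hwv⟩ := (mem_VC _).1 ht
          have hwveq : w = v := congrArg Prod.fst hwv
          exact hvX (hwveq ▸ hw)
        · exact Or.inr (Or.inl ⟨h v, (mem_VC _).2 ⟨v, hv, rfl⟩, rfl⟩)
        · exact Or.inr (Or.inr (Or.inl ⟨h v, (mem_VC _).2 ⟨v, hv, rfl⟩, rfl⟩))
        · exact Or.inr (Or.inr (Or.inr
            ⟨h u, h v, ⟨s(u, v), huv, Sym2.map_pair_eq _ _ _⟩, rfl⟩))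
      have hsub := (hg'tree i s hne').map ψ hψinj.injOn (ECset E par C) hedges
      rwa [key] at hsub
    · have him : ∀ e : Sym2 α, Sym2.map Prod.fst (Sym2.map h e) = e := by
        intro e
        rw [Sym2.map_map]
        show Sym2.map id e = e
        rw [Sym2.map_id, id]
      rw [summary, Set.image_image]
      simp only [him, Set.image_id']

end Phylo
end

section
/- Let Q be an IPSTN problem defined by a phylogeny ⟨V,E,I,S,f⟩ with root R and a function v ↦ (τ_min(v), τ_max(v)). If a set X of 2-element subsets of V↑ is admissible and there exists a real-valued function τ on V ∪ V_X such that (a) for every v ∈ V, τ_min(v) < τ(v) < τ_max(v); (b) for every v ∈ V \ {R}, τ(par(v)) < τ(v); (c) for every element v↑ of V_X, τ(par(v)) < τ(v↑) < τ(v); and (d) for every element {u↑, v↑} of X, τ(u↑) = τ(v↑); then X is a solution to Q. In particular, the set C obtained from X by replacing each symbol v↑ in every element of X with the event v↑t where t = τ(v↑) is a perfect simple set of contacts for the temporal phylogeny ⟨V,E,I,S,f,τ|_V⟩, and X is the summary of C. -/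
namespace Phylo

variable {α : Type*} {ι : Type*} {σ : Type*}

section Helpers

variable {β : Type*}

lemma reachableIn_map (Ψ : α → β) {E : Set (α × α)} {W : Set α} {x y : α}
    (h : ReachableIn E W x y) :
    ReachableIn (Prod.map Ψ Ψ '' E) (Ψ '' W) (Ψ x) (Ψ y) := by
  obtain ⟨n, p, h0, hn, hW, hE⟩ := h
  exact ⟨n, Ψ ∘ p, by simp [h0], by simp [hn],
    fun j hj => ⟨p j, hW j hj, rfl⟩,
    fun j hj => ⟨(p j, p (j + 1)), hE j hj, rfl⟩⟩

lemma isRootedTree_map {Ψ : α → β} (hΨ : Function.Injective Ψ)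
    {W : Set α} {F : Set (α × α)} {r : α} (h : IsRootedTree W F r) :
    IsRootedTree (Ψ '' W) (Prod.map Ψ Ψ '' F) (Ψ r) := by
  constructor
  · exact h.finite.image Ψ
  · rintro e ⟨a, ha, rfl⟩; exact ⟨a.1, h.edge_fst_mem a ha, rfl⟩
  · rintro e ⟨a, ha, rfl⟩; exact ⟨a.2, h.edge_snd_mem a ha, rfl⟩
  · rintro e ⟨a, ha, rfl⟩ hEq; exact h.edge_ne a ha (hΨ hEq)
  · exact ⟨r, h.root_mem, rfl⟩
  · rintro u ⟨a, ha, hEq⟩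
    have h2 : a.2 = r := hΨ (congrArg Prod.snd hEq)
    exact h.root_no_parent a.1 ((Prod.ext rfl h2 : a = (a.1, r)) ▸ ha)
  · rintro v' ⟨v, hv, rfl⟩ hne
    have hvr : v ≠ r := fun h' => hne (congrArg Ψ h')
    obtain ⟨u, hu, huniq⟩ := h.parent_unique v hv hvr
    refine ⟨Ψ u, ⟨(u, v), hu, rfl⟩, ?_⟩
    rintro u' ⟨a, ha, hEq⟩
    have ha2 : a.2 = v := hΨ (congrArg Prod.snd hEq)
    have ha1 : a.1 = u := huniq a.1 ((Prod.ext rfl ha2 : a = (a.1, v)) ▸ ha)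
    exact ((congrArg Prod.fst hEq).symm.trans (congrArg Ψ ha1) :)
  · rintro v' ⟨v, hv, rfl⟩
    exact reachableIn_map Ψ (h.root_reaches v hv)

end Helpers

/-- Proposition 1, right-to-left.  If `X` is admissible and
there is a real-valued function `τ` on `V ∪ V_X` satisfying (a)–(d), then `X`
is a solution to `Q`; in particular, the set `C` obtained from `X` by replacing
each symbol `v↑` with the event `v↑t` where `t = τ(v↑)` is a perfect simple
set of contacts for the temporal phylogeny `⟨V,E,I,S,f,τ|_V⟩`, and `X` is the
summary of `C`. -/
theorem ipstn_admissible_and_timeAssignment_implies_solution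
    {α ι σ : Type*} [Finite ι] [Finite σ]
    (V : Set α) (E : Set (α × α)) (R : α) (par : α → α) (f : α → ι → σ)
    (τmin τmax : α → EReal)
    (hT : IsRootedTree V E R)
    (hpar : ∀ v ∈ V, v ≠ R → (par v, v) ∈ E)
    (hint : ∀ v ∈ V, τmin v < τmax v)
    (X : Set (Sym2 α))
    (hX : ∀ e ∈ X, ¬ e.IsDiag ∧ ∀ v ∈ e, v ∈ V ∧ v ≠ R)
    (hadm : Admissible V E par f X)
    (τ : α ⊕ α → ℝ)
    (hτ : TimeAssignment V R par τmin τmax X τ) :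
    IsSolution V E R par f τmin τmax X ∧
      SimpleContacts V R par (fun v => τ (Sum.inl v))
        (Sym2.map (fun v => (v, τ (Sum.inr v))) '' X) ∧
      PerfectContacts V E par f
        (Sym2.map (fun v => (v, τ (Sum.inr v))) '' X) ∧
      X = summary (Sym2.map (fun v => (v, τ (Sum.inr v))) '' X) := by
  set φ : α → α × ℝ := fun v => (v, τ (Sum.inr v)) with hφdef
  set Ψ : α ⊕ α → α ⊕ (α × ℝ) := Sum.map id φ with hΨdef
  set C : Set (Sym2 (α × ℝ)) := Sym2.map φ '' X with hCdef
  obtain ⟨hτ1, hτ2, hτ3, hτ4⟩ := hτ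
  have hφinj : Function.Injective φ := fun a b h => congrArg Prod.fst h
  have hΨinj : Function.Injective Ψ :=
    Function.Injective.sumMap Function.injective_id hφinj
  -- V_C is the image of V_X under φ
  have hVC : VCset C = φ '' VXset X := by
    ext p
    constructor
    · rintro ⟨c, ⟨e, he, rfl⟩, hp⟩
      obtain ⟨a, ha, rfl⟩ := Sym2.mem_map.mp hp
      exact ⟨a, ⟨e, he, ha⟩, rfl⟩
    · rintro ⟨a, ⟨e, he, ha⟩, rfl⟩
      exact ⟨Sym2.map φ e, ⟨e, he, rfl⟩, Sym2.mem_map.mpr ⟨a, ha, rfl⟩⟩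
  -- X is the summary of C
  have hkey : ∀ e : Sym2 α, Sym2.map Prod.fst (Sym2.map φ e) = e := by
    intro e
    induction e using Sym2.ind with
    | _ u v => simp [φ]
  have hsum : X = summary C := by
    ext e
    constructor
    · intro he; exact ⟨Sym2.map φ e, ⟨e, he, rfl⟩, hkey e⟩
    · rintro ⟨c, ⟨e', he', rfl⟩, hc⟩
      rw [← hc, hkey]; exact he'
  -- X (hence C) is finite
  have hXfin : X.Finite := by
    have hsub : X ⊆ Sym2.mk.uncurry '' (V ×ˢ V) := by
      intro e
      induction e using Sym2.ind with
      | _ u v =>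
        intro he
        have hu := ((hX _ he).2 u (Sym2.mem_mk_left u v)).1
        have hv := ((hX _ he).2 v (Sym2.mem_mk_right u v)).1
        exact ⟨(u, v), Set.mem_prod.mpr ⟨hu, hv⟩, rfl⟩
    exact ((hT.finite.prod hT.finite).image _).subset hsub
  -- the contacts in C are contacts
  have hcontact : ∀ c ∈ C, IsContact V R par (fun v => τ (Sum.inl v)) c := by
    rintro c ⟨e, he, rfl⟩
    revert he
    induction e using Sym2.ind with
    | _ u v =>
      intro he
      obtain ⟨hdiag, hmem⟩ := hX _ he
      have hu := hmem u (Sym2.mem_mk_left u v)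
      have hv := hmem v (Sym2.mem_mk_right u v)
      have huX : u ∈ VXset X := ⟨_, he, Sym2.mem_mk_left u v⟩
      have hvX : v ∈ VXset X := ⟨_, he, Sym2.mem_mk_right u v⟩
      have htuv := hτ4 u v he
      rw [Sym2.map_pair_eq]
      refine ⟨?_, ?_, ?_⟩
      · rw [Sym2.mk_isDiag_iff]
        intro h
        exact hdiag (Sym2.mk_isDiag_iff.mpr (congrArg Prod.fst h))
      · intro p hp
        rw [Sym2.mem_iff] at hp
        rcases hp with rfl | rfl
        · exact ⟨hu.1, hu.2, (hτ3 u huX).1, le_of_lt (hτ3 u huX).2⟩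
        · exact ⟨hv.1, hv.2, (hτ3 v hvX).1, le_of_lt (hτ3 v hvX).2⟩
      · intro p hp q hq
        rw [Sym2.mem_iff] at hp hq
        rcases hp with rfl | rfl <;> rcases hq with rfl | rfl <;>
          simp [φ, htuv]
  -- C is a simple set of contacts
  have hsimple : SimpleContacts V R par (fun v => τ (Sum.inl v)) C := by
    refine ⟨hXfin.image _, hcontact, ?_, ?_⟩
    · intro p hp
      rw [hVC] at hp
      obtain ⟨a, haX, rfl⟩ := hp
      exact (hτ3 a haX).2
    · intro v t t' h1 h2
      rw [hVC] at h1 h2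
      obtain ⟨a, _, ha⟩ := h1
      obtain ⟨b, _, hb⟩ := h2
      have ha1 : a = v := congrArg Prod.fst ha
      have ha2 : τ (Sum.inr a) = t := congrArg Prod.snd ha
      have hb1 : b = v := congrArg Prod.fst hb
      have hb2 : τ (Sum.inr b) = t' := congrArg Prod.snd hb
      rw [← ha2, ← hb2, ha1, hb1]
  -- C is perfect
  obtain ⟨g, hgleaf, hgtree⟩ := hadm
  set g' : α ⊕ (α × ℝ) → ι → σ := fun x => g (Sum.map id Prod.fst x) with hg'def
  have hgΨ : ∀ x, g' (Ψ x) = g x := by rintro (v | v) <;> rfl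
  have hW : ∀ (i : ι) (s : σ),
      {x ∈ netVertsC V C | g' x i = s} = Ψ '' {x ∈ netVertsX V X | g x i = s} := by
    intro i s
    ext x
    constructor
    · rintro ⟨hx, hgx⟩
      simp only [netVertsC, Set.mem_union, Set.mem_image] at hx
      rcases hx with ⟨v, hv, rfl⟩ | ⟨p, hp, rfl⟩
      · exact ⟨Sum.inl v, ⟨Or.inl ⟨v, hv, rfl⟩, hgx⟩, rfl⟩
      · rw [hVC] at hp
        obtain ⟨a, haX, rfl⟩ := hp
        exact ⟨Sum.inr a, ⟨Or.inr ⟨a, haX, rfl⟩, hgx⟩, rfl⟩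
    · rintro ⟨y, ⟨hy, hgy⟩, rfl⟩
      refine ⟨?_, (congrFun (hgΨ y) i).trans hgy⟩
      simp only [netVertsX, Set.mem_union, Set.mem_image] at hy
      rcases hy with ⟨v, hv, rfl⟩ | ⟨w, hw, rfl⟩
      · exact Or.inl ⟨v, hv, rfl⟩
      · exact Or.inr ⟨φ w, by rw [hVC]; exact ⟨w, hw, rfl⟩, rfl⟩
  have hedge : ∀ e ∈ EXset E par X, Prod.map Ψ Ψ e ∈ ECset E par C := by
    rintro e (⟨u, v, huv, hvX, rfl⟩ | ⟨v, hv, rfl⟩ | ⟨v, hv, rfl⟩ | ⟨u, v, hXuv, rfl⟩)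
    · refine Or.inl ⟨u, v, huv, ?_, rfl⟩
      intro t ht
      rw [hVC] at ht
      obtain ⟨a, haX, ha⟩ := ht
      have ha1 : a = v := congrArg Prod.fst ha
      exact hvX (ha1 ▸ haX)
    · exact Or.inr (Or.inl ⟨φ v, by rw [hVC]; exact ⟨v, hv, rfl⟩, rfl⟩)
    · exact Or.inr (Or.inr (Or.inl ⟨φ v, by rw [hVC]; exact ⟨v, hv, rfl⟩, rfl⟩))
    · exact Or.inr (Or.inr (Or.inr
        ⟨φ u, φ v, ⟨s(u, v), hXuv, Sym2.map_pair_eq φ u v⟩, rfl⟩))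
  have hperf : PerfectContacts V E par f C := by
    refine ⟨g', fun v hv i => hgleaf v hv i, ?_⟩
    intro i s hne
    rw [hW i s] at hne ⊢
    obtain ⟨F', hF'sub, hF'mem, r, htree⟩ :=
      hgtree i s (Set.Nonempty.of_image hne)
    refine ⟨Prod.map Ψ Ψ '' F', ?_, ?_, Ψ r, isRootedTree_map hΨinj htree⟩
    · rintro e' ⟨a, ha, rfl⟩
      exact hedge a (hF'sub ha)
    · rintro e' ⟨a, ha, rfl⟩
      obtain ⟨h1, h2⟩ := hF'mem a ha
      exact ⟨⟨a.1, h1, rfl⟩, ⟨a.2, h2, rfl⟩⟩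
  -- the time function is increasing along the edges
  have hEdge : ∀ e ∈ E, τ (Sum.inl e.1) < τ (Sum.inl e.2) := by
    intro e he
    have hv2 : e.2 ∈ V := hT.edge_snd_mem e he
    have hv2R : e.2 ≠ R := fun h =>
      hT.root_no_parent e.1 ((Prod.ext rfl h : e = (e.1, R)) ▸ he)
    obtain ⟨u, hu, huniq⟩ := hT.parent_unique e.2 hv2 hv2R
    have h1 : e.1 = u := huniq e.1 he
    have h2 : par e.2 = u := huniq (par e.2) (hpar e.2 hv2 hv2R)
    have := hτ2 e.2 hv2 hv2R
    rwa [h2, ← h1] at this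
  refine ⟨⟨hX, fun v => τ (Sum.inl v), hEdge, fun v hv => hτ1 v hv,
    C, hsimple, hperf, hsum⟩, hsimple, hperf, hsum⟩

end Phylo
end

section
/- Let T = ⟨V,E,I,S,f,τ⟩ be a temporal phylogeny and let C be a simple set of contacts for T. Extend τ to V ∪ V_C by setting τ(v↑t) = t for every event v↑t ∈ V_C. Then for every edge ⟨x,y⟩ of the network ⟨V ∪ V_C, E_C⟩, either ⟨x,y⟩ is a lateral edge and τ(x) = τ(y), or τ(x) < τ(y). Consequently, every directed cycle in the network ⟨V ∪ V_C, E_C⟩ consists entirely of lateral edges; in particular, no directed cycle of the network contains an edge derived from a tree edge of T. -/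
namespace Phylo

variable {α : Type*} {ι : Type*} {σ : Type*}

/-- Let `T = ⟨V,E,I,S,f,τ⟩` be a temporal phylogeny and `C`
a simple set of contacts for `T`.  Extending `τ` to `V ∪ V_C` by
`τ(v↑t) = t` (i.e. using `Sum.elim τ Prod.snd`), every edge `⟨x,y⟩` of the
network `⟨V ∪ V_C, E_C⟩` is either a lateral edge with `τ(x) = τ(y)`, or
satisfies `τ(x) < τ(y)`.  Consequently, every directed cycle of the network
consists entirely of lateral edges. -/
theorem temporal_network_edges_monotone_and_cycles_lateral
    {α ι σ : Type*} [Finite ι] [Finite σ]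
    (V : Set α) (E : Set (α × α)) (R : α) (par : α → α) (f : α → ι → σ)
    (τ : α → ℝ)
    (hT : IsRootedTree V E R)
    (hpar : ∀ v ∈ V, v ≠ R → (par v, v) ∈ E)
    (hτ : ∀ e ∈ E, τ e.1 < τ e.2)
    (C : Set (Sym2 (α × ℝ)))
    (hC : SimpleContacts V R par τ C) :
    (∀ e ∈ ECset E par C,
        (IsLateralEdgeC C e ∧
          Sum.elim τ Prod.snd e.1 = Sum.elim τ Prod.snd e.2) ∨
        Sum.elim τ Prod.snd e.1 < Sum.elim τ Prod.snd e.2) ∧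
    ∀ (n : ℕ) (p : ℕ → α ⊕ (α × ℝ)), 0 < n → p n = p 0 →
      (∀ j < n, (p j, p (j + 1)) ∈ ECset E par C) →
      ∀ j < n, IsLateralEdgeC C (p j, p (j + 1)) := by
  obtain ⟨hfin, hcont, hlt, huniq⟩ := hC
  have hedge : ∀ e ∈ ECset E par C,
      (IsLateralEdgeC C e ∧ Sum.elim τ Prod.snd e.1 = Sum.elim τ Prod.snd e.2) ∨
      Sum.elim τ Prod.snd e.1 < Sum.elim τ Prod.snd e.2 := by
    rintro e he
    rcases he with ⟨u, v, huv, -, rfl⟩ | ⟨q, hq, rfl⟩ | ⟨q, hq, rfl⟩ | hlat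
    · right; exact hτ _ huv
    · right
      obtain ⟨c, hc, hqc⟩ := hq
      simpa using ((hcont c hc).2.1 q hqc).2.2.1
    · right; simpa using hlt q hq
    · left
      refine ⟨hlat, ?_⟩
      obtain ⟨a, b, hab, rfl⟩ := hlat
      simpa using (hcont _ hab).2.2 a (Sym2.mem_mk_left a b) b (Sym2.mem_mk_right a b)
  refine ⟨hedge, ?_⟩
  intro n p hn hcyc hE j hj
  set g : α ⊕ (α × ℝ) → ℝ := Sum.elim τ Prod.snd with hg
  have step : ∀ k < n, g (p k) ≤ g (p (k + 1)) := by
    intro k hk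
    rcases hedge _ (hE k hk) with ⟨-, h⟩ | h
    · exact le_of_eq h
    · exact le_of_lt h
  have mono : ∀ b, b ≤ n → ∀ a, a ≤ b → g (p a) ≤ g (p b) := by
    intro b
    induction b with
    | zero => intro _ a ha; simp [Nat.le_zero.mp ha]
    | succ b ih =>
      intro hbn a ha
      rcases Nat.le_succ_iff_eq_or_le.mp ha with rfl | h
      · exact le_refl _
      · exact (ih (le_trans (Nat.le_succ b) hbn) a h).trans
          (step b (Nat.succ_le.mp hbn))
  rcases hedge _ (hE j hj) with ⟨h, -⟩ | h
  · exact h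
  · exfalso
    have h1 : g (p 0) ≤ g (p j) := mono j (le_of_lt hj) 0 (Nat.zero_le _)
    have h2 : g (p (j + 1)) ≤ g (p n) := mono n (le_refl n) (j + 1) hj
    rw [hcyc] at h2
    exact absurd (h1.trans_lt (h.trans_le h2)) (lt_irrefl _)


end Phylo
end

section
/- Let ⟨V,E⟩ be a finite rooted tree with root R, let X be a set of 2-element subsets of V↑ with |X| ≤ k, and let ⟨V ∪ V_X, E_X⟩ be the associated network, whose lateral edges are the pairs ⟨u↑,v↑⟩ and ⟨v↑,u↑⟩ for {u↑,v↑} ∈ X. Let W be a subset of V ∪ V_X and let x, y ∈ W. If y is reachable from x by a directed path in ⟨V ∪ V_X, E_X⟩ all of whose vertices belong to W, then y is reachable from x by such a path containing at most k lateral edges. -/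
namespace Phylo

variable {α : Type*} {ι : Type*} {σ : Type*}

/-- Let `⟨V,E⟩` be a finite rooted tree with root `R`, `X` a
set of 2-element subsets of `V↑` with `|X| ≤ k`, and `⟨V ∪ V_X, E_X⟩` the
associated network.  If `y` is reachable from `x` by a directed path all of
whose vertices belong to `W ⊆ V ∪ V_X`, then `y` is reachable from `x` by such
a path containing at most `k` lateral edges. -/
theorem reachable_with_at_most_k_lateral_edges
    {α : Type*}
    (V : Set α) (E : Set (α × α)) (R : α) (par : α → α)
    (hT : IsRootedTree V E R)
    (hpar : ∀ v ∈ V, v ≠ R → (par v, v) ∈ E)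
    (X : Set (Sym2 α))
    (hX : ∀ e ∈ X, ¬ e.IsDiag ∧ ∀ v ∈ e, v ∈ V ∧ v ≠ R)
    (k : ℕ) (hfin : X.Finite) (hcard : X.ncard ≤ k)
    (W : Set (α ⊕ α)) (hW : W ⊆ netVertsX V X)
    (x y : α ⊕ α) (hx : x ∈ W) (hy : y ∈ W)
    (n : ℕ) (p : ℕ → α ⊕ α)
    (hp0 : p 0 = x) (hpn : p n = y)
    (hpW : ∀ j ≤ n, p j ∈ W)
    (hpE : ∀ j < n, (p j, p (j + 1)) ∈ EXset E par X) :
    ∃ (m : ℕ) (q : ℕ → α ⊕ α),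
      q 0 = x ∧ q m = y ∧ (∀ j ≤ m, q j ∈ W) ∧
      (∀ j < m, (q j, q (j + 1)) ∈ EXset E par X) ∧
      {j | j < m ∧ IsLateralEdgeX X (q j, q (j + 1))}.ncard ≤ k := by
  classical
  have hex : ∃ m : ℕ, ∃ p : ℕ → α ⊕ α, p 0 = x ∧ p m = y ∧
      (∀ j ≤ m, p j ∈ W) ∧ ∀ j < m, (p j, p (j + 1)) ∈ EXset E par X :=
    ⟨n, p, hp0, hpn, hpW, hpE⟩
  obtain ⟨q, hq0, hqm, hqW, hqE⟩ := Nat.find_spec hex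
  set m := Nat.find hex with hm
  have hmin : ∀ m' < m, ¬ ∃ p : ℕ → α ⊕ α, p 0 = x ∧ p m' = y ∧
      (∀ j ≤ m', p j ∈ W) ∧ ∀ j < m', (p j, p (j + 1)) ∈ EXset E par X :=
    fun m' h => Nat.find_min hex h
  -- minimal path is injective
  have key : ∀ i j, i < j → j ≤ m → q i ≠ q j := by
    intro i j hij hjm heq
    set d := j - i with hd
    have hd0 : 0 < d := Nat.sub_pos_of_lt hij
    set g : ℕ → ℕ := fun t => if t < i then t else t + d with hg
    apply hmin (m - d) (by omega)
    refine ⟨fun t => q (g t), ?_, ?_, ?_, ?_⟩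
    · show q (g 0) = x
      by_cases h0 : 0 < i
      · have : g 0 = 0 := by simp [hg, h0]
        rw [this, hq0]
      · have hi0 : i = 0 := by omega
        have : g 0 = j := by simp [hg, hi0, hd]
        rw [this, ← heq, hi0, hq0]
    · show q (g (m - d)) = y
      have : g (m - d) = m := by
        have h1 : ¬ (m - d < i) := by omega
        simp only [hg, h1, if_false]; omega
      rw [this, hqm]
    · intro t ht
      show q (g t) ∈ W
      apply hqW
      by_cases h : t < i
      · simp only [hg, h, if_true]; omega
      · simp only [hg, h, if_false]; omega
    · intro t ht
      show (q (g t), q (g (t + 1))) ∈ EXset E par X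
      rcases lt_trichotomy (t + 1) i with h | h | h
      · have hgt : g t = t := by simp [hg]; omega
        have hgt1 : g (t + 1) = t + 1 := by simp [hg, h]
        rw [hgt, hgt1]
        exact hqE t (by omega)
      · have hgt : g t = t := by simp [hg]; omega
        have hgt1 : g (t + 1) = j := by
          simp only [hg, lt_irrefl, if_neg (by omega : ¬ t + 1 < i)]
          omega
        rw [hgt, hgt1, ← heq, ← h]
        exact hqE t (by omega)
      · have hgt : g t = t + d := by simp only [hg, if_neg (by omega : ¬ t < i)]
        have hgt1 : g (t + 1) = t + 1 + d := by
          simp only [hg, if_neg (by omega : ¬ t + 1 < i)]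
        rw [hgt, hgt1]
        have : t + 1 + d = (t + d) + 1 := by omega
        rw [this]
        exact hqE (t + d) (by omega)
  have hinj : ∀ i ≤ m, ∀ j ≤ m, q i = q j → i = j := by
    intro i hi j hj heq
    rcases lt_trichotomy i j with h | h | h
    · exact absurd heq (key i j h hj)
    · exact h
    · exact absurd heq.symm (key j i h hi)
  refine ⟨m, q, hq0, hqm, hqW, hqE, ?_⟩
  -- map each lateral-edge index to its pair in X
  set f : ℕ → Sym2 α := fun j =>
    match q j, q (j + 1) with
    | Sum.inr u, Sum.inr v => s(u, v)
    | _, _ => s(R, R) with hf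
  have hmaps : ∀ j ∈ {j | j < m ∧ IsLateralEdgeX X (q j, q (j + 1))}, f j ∈ X := by
    rintro j ⟨-, u, v, huv, heq⟩
    have h1 : q j = Sum.inr u := congrArg Prod.fst heq
    have h2 : q (j + 1) = Sum.inr v := congrArg Prod.snd heq
    have : f j = s(u, v) := by rw [hf]; simp only [h1, h2]
    rw [this]; exact huv
  have hinjOn : Set.InjOn f {j | j < m ∧ IsLateralEdgeX X (q j, q (j + 1))} := by
    rintro i ⟨him, u, v, huv, hei⟩ j ⟨hjm, u', v', huv', hej⟩ hfij
    have h1 : q i = Sum.inr u := congrArg Prod.fst hei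
    have h2 : q (i + 1) = Sum.inr v := congrArg Prod.snd hei
    have h3 : q j = Sum.inr u' := congrArg Prod.fst hej
    have h4 : q (j + 1) = Sum.inr v' := congrArg Prod.snd hej
    have hfi : f i = s(u, v) := by rw [hf]; simp only [h1, h2]
    have hfj : f j = s(u', v') := by rw [hf]; simp only [h3, h4]
    rw [hfi, hfj] at hfij
    rcases Sym2.eq_iff.mp hfij with ⟨rfl, rfl⟩ | ⟨rfl, rfl⟩
    · exact hinj i (by omega) j (by omega) (by rw [h1, h3])
    · have e1 : i = j + 1 := hinj i (by omega) (j + 1) (by omega) (by rw [h1, h4])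
      have e2 : i + 1 = j := hinj (i + 1) (by omega) j (by omega) (by rw [h2, h3])
      omega
  calc {j | j < m ∧ IsLateralEdgeX X (q j, q (j + 1))}.ncard
      ≤ X.ncard := Set.ncard_le_ncard_of_injOn f hmaps hinjOn hfin
    _ ≤ k := hcard

end Phylo
end
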